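/- Let Ω ⊆ ℝ^d be open, g, h : Ω → ℂ continuous, and τ ∈ D(Ω) a test function with compact support in Ω. Then for every n ∈ ℕ the set {φ ∈ D_0 : |∫_Ω ((g⊛φ)(x)·(h⊛φ)(x) − g(x)h(x))·τ(x) dx| < 1/n} belongs to U; that is, the pairing of E_Ω(g)E_Ω(h) − E_Ω(gh) with τ is an infinitesimal asymptotic number (the embedding preserves the multiplication of continuous functions up to weak association). -/

import Mathlib

open MeasureTheory Filter

noncomputable section

/-- ℝ^d with the Euclidean norm. -/
abbrev Rd (d : ℕ) := EuclideanSpace ℝ (Fin d)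

/-- The partial derivative in the `i`-th coordinate direction. -/
noncomputable def pderivI (d : ℕ) (i : Fin d) (f : Rd d → ℂ) : Rd d → ℂ :=
  fun x => fderiv ℝ f x (EuclideanSpace.single i (1 : ℝ))

/-- The iterated partial derivative `∂^α` of multi-index order `α`. -/
noncomputable def multiDeriv (d : ℕ) (α : Fin d → ℕ) (f : Rd d → ℂ) : Rd d → ℂ :=
  ((List.ofFn fun i : Fin d => (pderivI d i)^[α i]).foldr (· ∘ ·) id) f

-- The radius of support `R_φ`.
open Classical in
noncomputable def radSupp (d : ℕ) (φ : Rd d → ℂ) : ℝ :=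
  if φ = 0 then 1 else sSup {r : ℝ | ∃ x, φ x ≠ 0 ∧ r = ‖x‖}

/-- The type of test functions `D(ℝ^d)`: smooth compactly supported `φ : ℝ^d → ℂ`. -/
def TestFun (d : ℕ) := {φ : Rd d → ℂ // ContDiff ℝ (⊤ : ℕ∞) φ ∧ HasCompactSupport φ}

/-- The directing set `D_n`. -/
def directingSet (d n : ℕ) : Set (TestFun d) :=
  {φ | (∀ x, (φ.1 x).im = 0) ∧
       (∀ x, φ.1 (-x) = φ.1 x) ∧
       radSupp d φ.1 ≤ 1 / n ∧
       (∫ x, φ.1 x) = 1 ∧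
       (∀ α : Fin d → ℕ, 1 ≤ ∑ i, α i → ∑ i, α i ≤ n →
          (∫ x, (∏ i, (x i : ℂ) ^ α i) * φ.1 x) = 0) ∧
       (∫ x, ‖φ.1 x‖) ≤ 1 + 1 / n ∧
       (∀ α : Fin d → ℕ, ∑ i, α i ≤ n → ∀ x,
          ‖multiDeriv d α φ.1 x‖ ≤ radSupp d φ.1 ^ (-(2 * ((∑ i, α i) + d) : ℤ)))}

end

noncomputable section

/-- `Ω̃_φ = {x ∈ Ω : dist(x, ∂Ω) > 2 R_φ and ‖x‖ < 1/R_φ}` (the distance to the boundary is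
taken in `[0,∞]`, so that the condition holds vacuously when `∂Ω = ∅`). -/
def omegaTilde (d : ℕ) (Ω : Set (Rd d)) (φ : Rd d → ℂ) : Set (Rd d) :=
  {x | x ∈ Ω ∧ ENNReal.ofReal (2 * radSupp d φ) < EMetric.infEdist x (frontier Ω) ∧
       ‖x‖ < 1 / radSupp d φ}

/-- The cut-off function `C_{Ω,φ}(x) = ∫_{Ω̃_φ} φ(x−t) dt`. -/
noncomputable def cutOff (d : ℕ) (Ω : Set (Rd d)) (φ : Rd d → ℂ) (x : Rd d) : ℂ :=
  ∫ t in omegaTilde d Ω φ, φ (x - t)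

end

/-- The `φ`-regularization of a (locally integrable) function `f` on `Ω`:
`(f⊛φ)(x) = ∫_Ω f(t)·C_{Ω,φ}(t)·φ(x−t) dt`. -/
noncomputable def freg (d : ℕ) (Ω : Set (Rd d)) (f : Rd d → ℂ) (φ : Rd d → ℂ)
    (x : Rd d) : ℂ :=
  ∫ t in Ω, f t * cutOff d Ω φ t * φ (x - t)

open Metric

set_option maxHeartbeats 1000000

lemma bddAbove_radset {d : ℕ} {φ : Rd d → ℂ} (hcs : HasCompactSupport φ) :
    BddAbove {r : ℝ | ∃ x, φ x ≠ 0 ∧ r = ‖x‖} := by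
  obtain ⟨C, hC⟩ := hcs.isBounded.exists_norm_le
  exact ⟨C, by rintro r ⟨x, hx, rfl⟩; exact hC x (subset_tsupport φ hx)⟩

lemma norm_le_radSupp {d : ℕ} {φ : Rd d → ℂ} (hcs : HasCompactSupport φ) (hne : φ ≠ 0)
    {x : Rd d} (hx : φ x ≠ 0) : ‖x‖ ≤ radSupp d φ := by
  rw [radSupp, if_neg hne]
  exact le_csSup (bddAbove_radset hcs) ⟨x, hx, rfl⟩

lemma eq_zero_of_radSupp_lt {d : ℕ} {φ : Rd d → ℂ} (hcs : HasCompactSupport φ)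
    {x : Rd d} (hx : radSupp d φ < ‖x‖) : φ x = 0 := by
  by_cases hne : φ = 0
  · simp [hne]
  · by_contra hc; exact absurd (norm_le_radSupp hcs hne hc) (not_le.mpr hx)

lemma radSupp_pos {d : ℕ} (hd : 0 < d) {φ : Rd d → ℂ} (hcs : HasCompactSupport φ)
    (hint : (∫ x, φ x) = 1) : 0 < radSupp d φ := by
  by_cases hne : φ = 0
  · rw [radSupp, if_pos hne]; norm_num
  · have hx0 : ∃ x : Rd d, φ x ≠ 0 ∧ 0 < ‖x‖ := by
      by_contra hc
      push_neg at hc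
      have hsub : Function.support φ ⊆ {(0 : Rd d)} := by
        intro x hx
        exact norm_eq_zero.mp (le_antisymm (hc x hx) (norm_nonneg x))
      haveI : Nontrivial (Rd d) := by
        refine nontrivial_of_ne (EuclideanSpace.single ⟨0, hd⟩ (1:ℝ)) 0 ?_
        intro hcontr
        have := congrArg (fun v : Rd d => v ⟨0, hd⟩) hcontr
        simp [EuclideanSpace.single_apply] at this
      haveI : NullSingletonClass (volume : Measure (Rd d)) := by infer_instance
      have hae : φ =ᵐ[volume] 0 :=
        measure_mono_null (fun x hx => hsub hx) (measure_singleton (0 : Rd d))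
      rw [integral_congr_ae hae] at hint
      simp at hint
    obtain ⟨x, hx, hx0⟩ := hx0
    exact hx0.trans_le (norm_le_radSupp hcs hne hx)


/-- for continuous `g, h` on `Ω` and a test function `τ` supported in `Ω`,
for every `n ≥ 1` the set `{φ : |∫_Ω ((g⊛φ)(h⊛φ) − gh)·τ| < 1/n}` belongs to `U`;
i.e. the pairing of `E_Ω(g)E_Ω(h) − E_Ω(gh)` with `τ` is infinitesimal. -/
theorem embedding_preserves_continuous_multiplication_up_to_association
    (d : ℕ) (hd : 0 < d) (Ω : Set (Rd d)) (hΩ : IsOpen Ω)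
    (g h : Rd d → ℂ) (hg : ContinuousOn g Ω) (hh : ContinuousOn h Ω)
    (τ : Rd d → ℂ) (hτ : ContDiff ℝ (⊤ : ℕ∞) τ ∧ HasCompactSupport τ ∧ tsupport τ ⊆ Ω)
    (U : Ultrafilter (TestFun d)) (hU : ∀ n : ℕ, 1 ≤ n → directingSet d n ∈ U)
    (n : ℕ) (hn : 1 ≤ n) :
    {φ : TestFun d |
      ‖∫ x in Ω,
        (freg d Ω g φ.1 x * freg d Ω h φ.1 x - g x * h x) * τ x‖ < 1 / n} ∈ U := by
  obtain ⟨hτsm, hτcs, hτΩ⟩ := hτ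
  set K := tsupport τ with hKdef
  have hKcomp : IsCompact K := hτcs
  have hKmeas : MeasurableSet K := (isClosed_tsupport τ).measurableSet
  obtain ⟨δ, hδpos, hδ⟩ := hKcomp.exists_cthickening_subset_open hΩ hτΩ
  set K₁ := cthickening (δ/4) K with hK₁def
  set K₂ := cthickening (δ/2) K with hK₂def
  have hK₁₂ : K₁ ⊆ K₂ := cthickening_mono (by linarith) K
  have hK₂δ : K₂ ⊆ cthickening δ K := cthickening_mono (by linarith) K
  have hK₂Ω : K₂ ⊆ Ω := hK₂δ.trans hδ
  have hK₂comp : IsCompact K₂ := hKcomp.cthickening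
  have hK₂meas : MeasurableSet K₂ := isClosed_cthickening.measurableSet
  have hKK₂ : K ⊆ K₂ := self_subset_cthickening K
  -- bounds
  obtain ⟨M0, hM0⟩ := (hKcomp.cthickening (r := δ)).isBounded.exists_norm_le
  set M : ℝ := max M0 1 with hMdef
  have hM1 : (1:ℝ) ≤ M := le_max_right _ _
  have hM : ∀ y ∈ cthickening δ K, ‖y‖ ≤ M := fun y hy => (hM0 y hy).trans (le_max_left _ _)
  obtain ⟨Bg0, hBg0⟩ := hK₂comp.exists_bound_of_continuousOn (hg.mono hK₂Ω)
  obtain ⟨Bh0, hBh0⟩ := hK₂comp.exists_bound_of_continuousOn (hh.mono hK₂Ω)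
  set Bg : ℝ := max Bg0 0
  set Bh : ℝ := max Bh0 0
  have hBg : ∀ x ∈ K₂, ‖g x‖ ≤ Bg := fun x hx => (hBg0 x hx).trans (le_max_left _ _)
  have hBh : ∀ x ∈ K₂, ‖h x‖ ≤ Bh := fun x hx => (hBh0 x hx).trans (le_max_left _ _)
  have hBg_nn : 0 ≤ Bg := le_max_right _ _
  have hBh_nn : 0 ≤ Bh := le_max_right _ _
  obtain ⟨T0, hT0⟩ := hKcomp.exists_bound_of_continuousOn hτsm.continuous.continuousOn
  set T : ℝ := max T0 0
  have hT : ∀ x ∈ K, ‖τ x‖ ≤ T := fun x hx => (hT0 x hx).trans (le_max_left _ _)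
  have hT_nn : (0:ℝ) ≤ T := le_max_right _ _
  set A : ℝ := Bg + Bh + 1 with hAdef
  have hA_pos : 0 < A := by positivity
  set CK : ℝ := (volume K).toReal with hCKdef
  have hCK_nn : 0 ≤ CK := ENNReal.toReal_nonneg
  -- choose ε
  have hn' : (0:ℝ) < 1 / n := by
    have : (1:ℝ) ≤ (n:ℝ) := by exact_mod_cast hn
    positivity
  obtain ⟨ε, hεpos, hεhalf, hεlt⟩ :
      ∃ ε : ℝ, 0 < ε ∧ ε ≤ 1/2 ∧ 2*ε*A*T*CK < 1/n := by
    set P : ℝ := 2*A*T*CK with hPdef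
    have hP_nn : 0 ≤ P := by positivity
    refine ⟨min (1/2) ((1/n) / (2*(P+1))), ?_, min_le_left _ _, ?_⟩
    · have : (0:ℝ) < (1/n) / (2*(P+1)) := by positivity
      exact lt_min (by norm_num) this
    · have h1 : min (1/2) ((1/n) / (2*(P+1))) ≤ (1/n) / (2*(P+1)) := min_le_right _ _
      have h2 : (0:ℝ) < 2*(P+1) := by positivity
      have h3 : 2 * min (1/2) ((1/n) / (2*(P+1))) * A * T * CK
          = min (1/2) ((1/n) / (2*(P+1))) * P := by ring
      rw [h3]
      have h4 : min (1/2) ((1/n) / (2*(P+1))) * P ≤ ((1/n) / (2*(P+1))) * P :=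
        mul_le_mul_of_nonneg_right h1 hP_nn
      refine h4.trans_lt ?_
      rw [div_mul_eq_mul_div, div_lt_iff₀ h2]
      nlinarith [hn']
  -- uniform continuity of g and h on K₂
  have hucg := Metric.uniformContinuousOn_iff.mp
    (hK₂comp.uniformContinuousOn_of_continuous (hg.mono hK₂Ω)) ε hεpos
  have huch := Metric.uniformContinuousOn_iff.mp
    (hK₂comp.uniformContinuousOn_of_continuous (hh.mono hK₂Ω)) ε hεpos
  obtain ⟨ηg, hηgpos, hηg⟩ := hucg
  obtain ⟨ηh, hηhpos, hηh⟩ := huch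
  -- choose m
  set r0 : ℝ := min (min (δ/4) (1/M)) (min ηg ηh) with hr0def
  have hr0pos : 0 < r0 := by
    have : (0:ℝ) < 1/M := by positivity
    exact lt_min (lt_min (by linarith) this) (lt_min hηgpos hηhpos)
  obtain ⟨m0, hm0⟩ := exists_nat_one_div_lt hr0pos
  set m : ℕ := m0 + 1 with hmdef
  have hm1 : 1 ≤ m := Nat.le_add_left 1 m0
  have hm0' : 1 / (m:ℝ) < r0 := by
    have : ((m:ℝ)) = (m0:ℝ) + 1 := by push_cast [hmdef]; ring
    rw [this]; exact hm0
  refine Filter.mem_of_superset (hU m hm1) ?_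
  intro φ hφ
  obtain ⟨-, heven, hrad, hint1, -, habs, -⟩ := hφ
  set R : ℝ := radSupp d φ.1 with hRdef
  have hφcont : Continuous φ.1 := φ.2.1.continuous
  have hφcs : HasCompactSupport φ.1 := φ.2.2
  have hφint : Integrable φ.1 := hφcont.integrable_of_hasCompactSupport hφcs
  have hR0 : 0 < R := radSupp_pos hd hφcs hint1
  have hRr0 : R < r0 := lt_of_le_of_lt hrad hm0'
  have hRδ : R < δ/4 := hRr0.trans_le ((min_le_left _ _).trans (min_le_left _ _))
  have hRM : R < 1/M := hRr0.trans_le ((min_le_left _ _).trans (min_le_right _ _))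
  have hRηg : R < ηg := hRr0.trans_le ((min_le_right _ _).trans (min_le_left _ _))
  have hRηh : R < ηh := hRr0.trans_le ((min_le_right _ _).trans (min_le_right _ _))
  have hφ0 : ∀ y : Rd d, R < ‖y‖ → φ.1 y = 0 := fun y hy => eq_zero_of_radSupp_lt hφcs hy
  have hφnorm2 : (∫ y, ‖φ.1 y‖) ≤ 2 := by
    have h1 : (∫ y, ‖φ.1 y‖) = ∫ y, ‖φ.1 y‖ := by
      rfl
    have h2 : 1 / (m:ℝ) ≤ 1 := by
      rw [div_le_one (by exact_mod_cast Nat.lt_of_lt_of_le Nat.zero_lt_one hm1)]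
      exact_mod_cast hm1
    rw [h1]; linarith [habs]
  -- geometric facts
  have hcb₁ : ∀ x ∈ K, ∀ t : Rd d, φ.1 (x - t) ≠ 0 → t ∈ K₁ := by
    intro x hx t ht
    have hnorm : ‖x - t‖ ≤ R := by
      by_contra hc; exact ht (hφ0 _ (not_le.mp hc))
    refine mem_cthickening_of_dist_le t x (δ/4) K hx ?_
    calc dist t x = ‖t - x‖ := dist_eq_norm t x
      _ = ‖x - t‖ := norm_sub_rev t x
      _ ≤ R := hnorm
      _ ≤ δ/4 := hRδ.le
  have hmemΩT : ∀ t ∈ K₁, ∀ s : Rd d, φ.1 (t - s) ≠ 0 → s ∈ omegaTilde d Ω φ.1 := by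
    intro t ht s hs
    have hnorm : ‖t - s‖ ≤ R := by
      by_contra hc; exact hs (hφ0 _ (not_le.mp hc))
    have hsK₂ : s ∈ K₂ := by
      rw [hK₂def, mem_cthickening_iff]
      calc EMetric.infEdist s K
          ≤ edist s t + EMetric.infEdist t K := EMetric.infEdist_le_edist_add_infEdist
        _ ≤ ENNReal.ofReal R + ENNReal.ofReal (δ/4) := by
            gcongr
            · rw [edist_dist]
              apply ENNReal.ofReal_le_ofReal
              rw [dist_eq_norm, norm_sub_rev]; exact hnorm
            · exact mem_cthickening_iff.mp ht
        _ = ENNReal.ofReal (R + δ/4) := (ENNReal.ofReal_add hR0.le (by linarith)).symm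
        _ ≤ ENNReal.ofReal (δ/2) := ENNReal.ofReal_le_ofReal (by linarith)
    simp only [omegaTilde, Set.mem_setOf_eq]
    refine ⟨hK₂Ω hsK₂, ?_, ?_⟩
    · have hfront : ∀ y ∈ frontier Ω, δ/2 ≤ dist s y := by
        intro y hy
        by_contra hc
        push_neg at hc
        have hyK : y ∈ cthickening δ K := by
          rw [mem_cthickening_iff]
          calc EMetric.infEdist y K
              ≤ edist y s + EMetric.infEdist s K := EMetric.infEdist_le_edist_add_infEdist
            _ ≤ ENNReal.ofReal (δ/2) + ENNReal.ofReal (δ/2) := by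
                gcongr
                · rw [edist_dist]
                  exact ENNReal.ofReal_le_ofReal (by rw [dist_comm]; linarith)
                · exact mem_cthickening_iff.mp hsK₂
            _ = ENNReal.ofReal (δ/2 + δ/2) :=
                (ENNReal.ofReal_add (by linarith) (by linarith)).symm
            _ ≤ ENNReal.ofReal δ := ENNReal.ofReal_le_ofReal (by linarith)
        have hyΩ : y ∈ Ω := hδ hyK
        rw [hΩ.frontier_eq] at hy
        exact hy.2 hyΩ
      rw [← hRdef]
      calc ENNReal.ofReal (2*R) < ENNReal.ofReal (δ/2) := by
            rw [ENNReal.ofReal_lt_ofReal_iff (by linarith)]; linarith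
        _ ≤ EMetric.infEdist s (frontier Ω) := by
            refine EMetric.le_infEdist.mpr ?_
            intro y hy
            rw [edist_dist]
            exact ENNReal.ofReal_le_ofReal (hfront y hy)
    · have hsM : ‖s‖ ≤ M := hM s (hK₂δ hsK₂)
      have hMpos : (0:ℝ) < M := lt_of_lt_of_le zero_lt_one hM1
      have hRM' : R * M < 1 := by
        have := (lt_div_iff₀ hMpos).mp hRM
        linarith
      have : M < 1/R := by
        rw [lt_div_iff₀ hR0]
        nlinarith
      rw [← hRdef]
      linarith
  -- cutoff is 1 on K₁
  have hcut : ∀ t ∈ K₁, cutOff d Ω φ.1 t = 1 := by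
    intro t ht
    rw [cutOff, setIntegral_eq_integral_of_forall_compl_eq_zero (fun s hs => ?_),
      integral_sub_left_eq_self φ.1 volume t]
    · exact hint1
    · by_contra hc; exact hs (hmemΩT t ht s hc)
  -- freg rewriting
  have hfreg : ∀ (f : Rd d → ℂ), ∀ x ∈ K,
      freg d Ω f φ.1 x = ∫ t in K₂, f t * φ.1 (x - t) := by
    intro f x hx
    have hptw : ∀ t, f t * cutOff d Ω φ.1 t * φ.1 (x - t) = f t * φ.1 (x - t) := by
      intro t
      by_cases hz : φ.1 (x - t) = 0
      · rw [hz, mul_zero, mul_zero]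
      · rw [hcut t (hcb₁ x hx t hz), mul_one]
    calc freg d Ω f φ.1 x = ∫ t in Ω, f t * φ.1 (x - t) :=
          integral_congr_ae (Eventually.of_forall hptw)
      _ = ∫ t, f t * φ.1 (x - t) := by
          refine setIntegral_eq_integral_of_forall_compl_eq_zero fun t ht => ?_
          by_cases hz : φ.1 (x - t) = 0
          · rw [hz, mul_zero]
          · exact absurd (hK₂Ω (hK₁₂ (hcb₁ x hx t hz))) ht
      _ = ∫ t in K₂, f t * φ.1 (x - t) := by
          refine (setIntegral_eq_integral_of_forall_compl_eq_zero fun t ht => ?_).symm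
          by_cases hz : φ.1 (x - t) = 0
          · rw [hz, mul_zero]
          · exact absurd (hK₁₂ (hcb₁ x hx t hz)) ht
  -- closeness
  have hclose : ∀ (f : Rd d → ℂ) (ηf : ℝ), R < ηf →
      ContinuousOn f K₂ →
      (∀ a ∈ K₂, ∀ b ∈ K₂, dist a b < ηf → dist (f a) (f b) < ε) →
      ∀ x ∈ K, ‖(∫ t in K₂, f t * φ.1 (x - t)) - f x‖ ≤ 2*ε := by
    intro f ηf hηf hfc hfu x hx
    have hφx_int : Integrable (fun t => φ.1 (x - t)) := hφint.comp_sub_left x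
    have hφx_intK : IntegrableOn (fun t => φ.1 (x - t)) K₂ := hφx_int.integrableOn
    have hφx_cont : Continuous (fun t : Rd d => φ.1 (x - t)) :=
      hφcont.comp (continuous_const.sub continuous_id)
    have hfφ_int : IntegrableOn (fun t => f t * φ.1 (x - t)) K₂ :=
      (hfc.mul hφx_cont.continuousOn).integrableOn_compact hK₂comp
    have h1 : (∫ t in K₂, φ.1 (x - t)) = 1 := by
      rw [setIntegral_eq_integral_of_forall_compl_eq_zero (fun t ht => ?_),
        integral_sub_left_eq_self φ.1 volume x]
      · exact hint1
      · by_contra hz; exact ht (hK₁₂ (hcb₁ x hx t hz))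
    have h2 : (∫ t in K₂, f t * φ.1 (x - t)) - f x
        = ∫ t in K₂, (f t - f x) * φ.1 (x - t) := by
      have h3 : ∫ t in K₂, (f t - f x) * φ.1 (x - t)
          = (∫ t in K₂, f t * φ.1 (x - t)) - ∫ t in K₂, f x * φ.1 (x - t) := by
        simp_rw [sub_mul]
        exact integral_sub hfφ_int (hφx_intK.const_mul (f x))
      rw [h3, integral_const_mul, h1, mul_one]
    rw [h2]
    have hb : ∀ t ∈ K₂, ‖(f t - f x) * φ.1 (x - t)‖ ≤ ε * ‖φ.1 (x - t)‖ := by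
      intro t ht
      by_cases hz : φ.1 (x - t) = 0
      · simp [hz]
      · have hnorm : ‖x - t‖ ≤ R := by
          by_contra hc; exact hz (hφ0 _ (not_le.mp hc))
        have hdist : dist t x < ηf := by
          rw [dist_eq_norm, norm_sub_rev]
          exact hnorm.trans_lt hηf
        have hd := hfu t ht x (hKK₂ hx) hdist
        rw [dist_eq_norm] at hd
        rw [norm_mul]
        exact mul_le_mul_of_nonneg_right hd.le (norm_nonneg _)
    have hφx_le2 : (∫ t in K₂, ‖φ.1 (x - t)‖) ≤ 2 := by
      have heq : (∫ t in K₂, ‖φ.1 (x - t)‖) = ∫ t, ‖φ.1 (x - t)‖ := by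
        refine setIntegral_eq_integral_of_forall_compl_eq_zero fun t ht => ?_
        by_cases hz : φ.1 (x - t) = 0
        · rw [hz, norm_zero]
        · exact absurd (hK₁₂ (hcb₁ x hx t hz)) ht
      rw [heq, integral_sub_left_eq_self (fun y => ‖φ.1 y‖) volume x]
      exact hφnorm2
    calc ‖∫ t in K₂, (f t - f x) * φ.1 (x - t)‖
        ≤ ∫ t in K₂, ε * ‖φ.1 (x - t)‖ :=
          norm_integral_le_of_norm_le ((hφx_intK.norm).const_mul ε)
            (ae_restrict_of_forall_mem hK₂meas hb)
      _ = ε * ∫ t in K₂, ‖φ.1 (x - t)‖ := integral_const_mul ε _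
      _ ≤ ε * 2 := mul_le_mul_of_nonneg_left hφx_le2 hεpos.le
      _ = 2 * ε := by ring
  -- final assembly
  have hclg := hclose g ηg hRηg (hg.mono hK₂Ω) hηg
  have hclh := hclose h ηh hRηh (hh.mono hK₂Ω) hηh
  simp only [Set.mem_setOf_eq]
  have hstep : (∫ x in Ω, (freg d Ω g φ.1 x * freg d Ω h φ.1 x - g x * h x) * τ x)
      = ∫ x in K, ((∫ t in K₂, g t * φ.1 (x - t)) * (∫ t in K₂, h t * φ.1 (x - t))
          - g x * h x) * τ x := by
    calc (∫ x in Ω, (freg d Ω g φ.1 x * freg d Ω h φ.1 x - g x * h x) * τ x)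
        = ∫ x, (freg d Ω g φ.1 x * freg d Ω h φ.1 x - g x * h x) * τ x := by
          refine setIntegral_eq_integral_of_forall_compl_eq_zero fun x hxΩ => ?_
          rw [image_eq_zero_of_notMem_tsupport (fun hxK => hxΩ (hτΩ hxK)), mul_zero]
      _ = ∫ x in K, (freg d Ω g φ.1 x * freg d Ω h φ.1 x - g x * h x) * τ x := by
          refine (setIntegral_eq_integral_of_forall_compl_eq_zero fun x hxK => ?_).symm
          rw [image_eq_zero_of_notMem_tsupport hxK, mul_zero]
      _ = _ := by
          refine setIntegral_congr_fun hKmeas fun x hx => ?_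
          rw [hfreg g x hx, hfreg h x hx]
  rw [hstep]
  have hptbound : ∀ x ∈ K,
      ‖((∫ t in K₂, g t * φ.1 (x - t)) * (∫ t in K₂, h t * φ.1 (x - t))
          - g x * h x) * τ x‖ ≤ (2*ε*A) * T := by
    intro x hx
    have e1 := hclg x hx
    have e2 := hclh x hx
    have e3 : ‖g x‖ ≤ Bg := hBg x (hKK₂ hx)
    have e4 : ‖h x‖ ≤ Bh := hBh x (hKK₂ hx)
    have e5 : ‖τ x‖ ≤ T := hT x hx
    set cg := ∫ t in K₂, g t * φ.1 (x - t)
    set ch := ∫ t in K₂, h t * φ.1 (x - t)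
    have key : cg * ch - g x * h x = (cg - g x) * ch + g x * (ch - h x) := by ring
    have hch : ‖ch‖ ≤ Bh + 1 := by
      calc ‖ch‖ = ‖h x + (ch - h x)‖ := by congr 1; ring
        _ ≤ ‖h x‖ + ‖ch - h x‖ := norm_add_le _ _
        _ ≤ Bh + 1 := by linarith
    have hfirst : ‖cg * ch - g x * h x‖ ≤ 2*ε*A := by
      rw [key]
      calc ‖(cg - g x) * ch + g x * (ch - h x)‖
          ≤ ‖(cg - g x) * ch‖ + ‖g x * (ch - h x)‖ := norm_add_le _ _
        _ = ‖cg - g x‖ * ‖ch‖ + ‖g x‖ * ‖ch - h x‖ := by rw [norm_mul, norm_mul]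
        _ ≤ (2*ε) * (Bh + 1) + Bg * (2*ε) := by
            gcongr
        _ = 2*ε*A := by rw [hAdef]; ring
    calc ‖(cg * ch - g x * h x) * τ x‖ = ‖cg * ch - g x * h x‖ * ‖τ x‖ := norm_mul _ _
      _ ≤ (2*ε*A) * T := mul_le_mul hfirst e5 (norm_nonneg _) (by positivity)
  calc ‖∫ x in K, ((∫ t in K₂, g t * φ.1 (x - t)) * (∫ t in K₂, h t * φ.1 (x - t))
          - g x * h x) * τ x‖
      ≤ (2*ε*A) * T * (volume K).toReal :=
        norm_setIntegral_le_of_norm_le_const hKcomp.measure_lt_top hptbound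
    _ = 2*ε*A*T*CK := by ring
    _ < 1 / n := hεlt
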